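/- In the GSP auction under the separable click model, with bidders sorted so that β₁b₁ ≥ β₂b₂ ≥ ... ≥ β_n b_n and bidder i assigned slot i with per-click price equal to the minimum bid keeping her slot (p_i = β_{i+1} b_{i+1} / β_i for i ≤ m), the allocation α_{j(i)} β_i as a function of bidder i's own bid (holding others fixed) is monotone nondecreasing, and the payment equals the allocation times the infimum bid achieving that allocation; hence by the single-parameter characterization GSP is truthful (almost everywhere) for simple value maximizers. -/

import Mathlib

open MeasureTheory

/-- The rank of our bidder when she bids `b`: the number of opponents whose
fixed score `s j` is at least her score `β * b` (ties counted against her).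
She is assigned slot `gspRank + 1`. -/
noncomputable def gspRank {k : ℕ} (s : Fin k → ℝ) (β : ℝ) (b : ℝ) : ℕ :=
  {j : Fin k | β * b ≤ s j}.ncard

/-- Expected-click allocation of our bidder with quality `β` when she bids `b`:
`A r` is the click factor `α_{r+1}` of slot `r + 1` (slots indexed from `0`),
and allocation in slot `r + 1` is `A r * β`; bidders ranked below slot `m` get
nothing. -/
noncomputable def gspAlloc {k : ℕ} (m : ℕ) (s : Fin k → ℝ) (β : ℝ) (A : ℕ → ℝ)
    (b : ℝ) : ℝ :=
  if gspRank s β b < m then A (gspRank s β b) * β else 0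

/-- The highest opponent score strictly below our bidder's score (0 if none):
the numerator of her GSP per-click price (minimum score keeping her slot). -/
noncomputable def gspNextScore {k : ℕ} (s : Fin k → ℝ) (β : ℝ) (b : ℝ) : ℝ :=
  sSup ({0} ∪ {x : ℝ | (∃ j, s j = x) ∧ x < β * b})

/-- Total expected GSP payment: allocation times the per-click price
`gspNextScore / β` (the minimum bid keeping the slot). -/
noncomputable def gspPay {k : ℕ} (m : ℕ) (s : Fin k → ℝ) (β : ℝ) (A : ℕ → ℝ)
    (b : ℝ) : ℝ :=
  gspAlloc m s β A b * (gspNextScore s β b / β)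

section Helpers

variable {k : ℕ} {m : ℕ} {s : Fin k → ℝ} {β : ℝ} {A : ℕ → ℝ}

lemma sgeSubset (hβ : 0 < β) {b b' : ℝ} (h : b ≤ b') :
    {j : Fin k | β * b' ≤ s j} ⊆ {j : Fin k | β * b ≤ s j} := fun j hj =>
  le_trans (mul_le_mul_of_nonneg_left h hβ.le) hj

lemma gspRank_anti (hβ : 0 < β) {b b' : ℝ} (h : b ≤ b') :
    gspRank s β b' ≤ gspRank s β b :=
  Set.ncard_le_ncard (sgeSubset hβ h) (Set.toFinite _)

lemma sge_eq_of_rank_eq (hβ : 0 < β) {b t : ℝ}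
    (h : gspRank s β b = gspRank s β t) :
    {j : Fin k | β * b ≤ s j} = {j : Fin k | β * t ≤ s j} := by
  unfold gspRank at h
  rcases le_total b t with hbt | hbt
  · exact (Set.eq_of_subset_of_ncard_le (sgeSubset hβ hbt) h.le
      (Set.toFinite _)).symm
  · exact Set.eq_of_subset_of_ncard_le (sgeSubset hβ hbt) h.ge (Set.toFinite _)

lemma gspAlloc_mono (hβ : 0 < β)
    (hA_strict : ∀ r r', r < r' → r' < m → A r' < A r)
    (hA_pos : ∀ r, r < m → 0 < A r) :
    Monotone (gspAlloc m s β A) := by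
  intro b b' h
  unfold gspAlloc
  have hr : gspRank s β b' ≤ gspRank s β b := gspRank_anti hβ h
  by_cases h2 : gspRank s β b < m
  · have h1 : gspRank s β b' < m := lt_of_le_of_lt hr h2
    rw [if_pos h1, if_pos h2]
    rcases hr.lt_or_eq with hlt | heq
    · exact mul_le_mul_of_nonneg_right (hA_strict _ _ hlt h2).le hβ.le
    · rw [heq]
  · rw [if_neg h2]
    by_cases h1 : gspRank s β b' < m
    · rw [if_pos h1]
      exact mul_nonneg (hA_pos _ h1).le hβ.le
    · rw [if_neg h1]

lemma gspAlloc_nonneg (hβ : 0 < β) (hA_pos : ∀ r, r < m → 0 < A r) (b : ℝ) :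
    0 ≤ gspAlloc m s β A b := by
  unfold gspAlloc
  split
  · exact mul_nonneg (hA_pos _ (by assumption)).le hβ.le
  · exact le_refl 0

lemma rank_eq_of_alloc_eq (hβ : 0 < β)
    (hA_strict : ∀ r r', r < r' → r' < m → A r' < A r)
    (hA_pos : ∀ r, r < m → 0 < A r)
    {b t : ℝ} (hb : gspRank s β b < m)
    (h : gspAlloc m s β A b = gspAlloc m s β A t) :
    gspRank s β b = gspRank s β t := by
  have hab : gspAlloc m s β A b = A (gspRank s β b) * β := if_pos hb
  have hpos : 0 < gspAlloc m s β A b := by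
    rw [hab]; exact mul_pos (hA_pos _ hb) hβ
  have hrt : gspRank s β t < m := by
    by_contra hc
    rw [h, gspAlloc, if_neg hc] at hpos
    exact lt_irrefl 0 hpos
  have hat : gspAlloc m s β A t = A (gspRank s β t) * β := if_pos hrt
  rw [hab, hat] at h
  have hAA : A (gspRank s β b) = A (gspRank s β t) :=
    mul_right_cancel₀ hβ.ne' h
  rcases lt_trichotomy (gspRank s β b) (gspRank s β t) with h1 | h1 | h1
  · exact absurd hAA (ne_of_gt (hA_strict _ _ h1 hrt))
  · exact h1
  · exact absurd hAA.symm (ne_of_gt (hA_strict _ _ h1 hb))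

lemma gspU_finite (b : ℝ) :
    (({0} : Set ℝ) ∪ {x : ℝ | (∃ j, s j = x) ∧ x < β * b}).Finite :=
  (Set.finite_singleton 0).union
    ((Set.finite_range s).subset (fun _ hx => hx.1))

lemma gspNextScore_nonneg (b : ℝ) : 0 ≤ gspNextScore s β b :=
  le_csSup (gspU_finite b).bddAbove (Set.mem_union_left _ rfl)

lemma le_gspNextScore {b : ℝ} {j : Fin k} (h : s j < β * b) :
    s j ≤ gspNextScore s β b :=
  le_csSup (gspU_finite b).bddAbove (Set.mem_union_right _ ⟨⟨j, rfl⟩, h⟩)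

lemma gspNextScore_mem (b : ℝ) :
    gspNextScore s β b = 0 ∨
      ∃ j, s j = gspNextScore s β b ∧ gspNextScore s β b < β * b := by
  have hmem : gspNextScore s β b ∈
      ({0} : Set ℝ) ∪ {x : ℝ | (∃ j, s j = x) ∧ x < β * b} :=
    Set.Nonempty.csSup_mem ⟨0, Set.mem_union_left _ rfl⟩
      (gspU_finite (s := s) (β := β) b)
  rcases hmem with h | h
  · exact Or.inl (Set.mem_singleton_iff.mp h)
  · obtain ⟨⟨j, hj⟩, hlt⟩ := h
    exact Or.inr ⟨j, hj, hlt⟩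

lemma gspNextScore_congr {b t : ℝ}
    (h : {j : Fin k | β * b ≤ s j} = {j : Fin k | β * t ≤ s j}) :
    gspNextScore s β b = gspNextScore s β t := by
  have key : ∀ j : Fin k, (s j < β * b ↔ s j < β * t) := by
    intro j
    have h' := Set.ext_iff.mp h j
    simp only [Set.mem_setOf_eq] at h'
    rw [← not_le, ← not_le, h']
  unfold gspNextScore
  congr 1
  ext x
  simp only [Set.mem_union, Set.mem_singleton_iff, Set.mem_setOf_eq]
  constructor
  · rintro (rfl | ⟨⟨j, rfl⟩, hlt⟩)
    · exact Or.inl rfl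
    · exact Or.inr ⟨⟨j, rfl⟩, (key j).mp hlt⟩
  · rintro (rfl | ⟨⟨j, rfl⟩, hlt⟩)
    · exact Or.inl rfl
    · exact Or.inr ⟨⟨j, rfl⟩, (key j).mpr hlt⟩

lemma gsp_sInf_eq (hβ : 0 < β) (hs : ∀ j, 0 ≤ s j)
    (hA_strict : ∀ r r', r < r' → r' < m → A r' < A r)
    (hA_pos : ∀ r, r < m → 0 < A r)
    {b : ℝ} (hrb : gspRank s β b < m) :
    sInf {z : ℝ | 0 ≤ z ∧ gspAlloc m s β A z = gspAlloc m s β A b} =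
      gspNextScore s β b / β := by
  set S : Set ℝ := {z : ℝ | 0 ≤ z ∧ gspAlloc m s β A z = gspAlloc m s β A b}
    with hS
  have hforward : ∀ z ∈ S, gspRank s β z = gspRank s β b := by
    intro z hz
    exact (rank_eq_of_alloc_eq hβ hA_strict hA_pos hrb hz.2.symm).symm
  have hbackward : ∀ z : ℝ, 0 ≤ z → gspRank s β z = gspRank s β b → z ∈ S := by
    intro z hz0 hz
    refine ⟨hz0, ?_⟩
    unfold gspAlloc
    rw [hz]
  by_cases hT : ∃ j, s j < β * b
  · obtain ⟨j0, hj0⟩ := hT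
    obtain ⟨jstar, hjs, hjlt⟩ :
        ∃ j, s j = gspNextScore s β b ∧ gspNextScore s β b < β * b := by
      rcases gspNextScore_mem (s := s) (β := β) b with h0 | h
      · refine ⟨j0, ?_, ?_⟩
        · have h1 := le_gspNextScore hj0
          rw [h0] at h1 ⊢
          exact le_antisymm h1 (hs j0)
        · rw [h0]
          exact lt_of_le_of_lt (hs j0) hj0
      · exact h
    set N := gspNextScore s β b with hN
    have hN0 : 0 ≤ N := gspNextScore_nonneg b
    have hNb : N / β < b := by
      rw [div_lt_iff₀ hβ]
      linarith [hjlt]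
    have hIoc : Set.Ioc (N / β) b ⊆ S := by
      rintro z ⟨hz1, hz2⟩
      have hz0 : 0 ≤ z := le_of_lt (lt_of_le_of_lt (div_nonneg hN0 hβ.le) hz1)
      have hzN : N < β * z := by
        rw [div_lt_iff₀ hβ] at hz1
        linarith
      have hsge : {j : Fin k | β * z ≤ s j} = {j : Fin k | β * b ≤ s j} := by
        apply Set.Subset.antisymm
        · intro j hj
          by_contra hc
          have h2 : s j ≤ N := le_gspNextScore (not_le.mp hc)
          have h3 : β * z ≤ s j := hj
          linarith
        · exact sgeSubset hβ hz2
      exact hbackward z hz0 (congrArg Set.ncard hsge)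
    have hlower : ∀ z ∈ S, N / β < z := by
      intro z hz
      by_contra hc
      have hcon : β * z ≤ N := by
        rw [not_lt, le_div_iff₀ hβ] at hc
        linarith
      have hnotmem : jstar ∉ {j : Fin k | β * b ≤ s j} := by
        intro hmem
        have : β * b ≤ s jstar := hmem
        rw [hjs] at this
        linarith
      have hsub : insert jstar {j : Fin k | β * b ≤ s j} ⊆
          {j : Fin k | β * z ≤ s j} := by
        rintro j hj
        rcases hj with rfl | hj
        · show β * z ≤ s j
          rw [hjs]
          exact hcon
        · have h3 : β * b ≤ s j := hj
          show β * z ≤ s j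
          linarith
      have hcard := Set.ncard_le_ncard hsub (Set.toFinite _)
      rw [Set.ncard_insert_of_notMem hnotmem (Set.toFinite _)] at hcard
      have hzr := hforward z hz
      unfold gspRank at hzr
      omega
    have hbS : b ∈ S := hIoc ⟨hNb, le_refl b⟩
    apply le_antisymm
    · calc sInf S ≤ sInf (Set.Ioc (N / β) b) :=
            csInf_le_csInf ⟨0, fun z hz => hz.1⟩ ⟨b, hNb, le_refl b⟩ hIoc
        _ = N / β := csInf_Ioc hNb
    · exact le_csInf ⟨b, hbS⟩ (fun z hz => (hlower z hz).le)
  · push_neg at hT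
    have hNz : gspNextScore s β b = 0 := by
      rcases gspNextScore_mem (s := s) (β := β) b with h0 | ⟨j, hjeq, hlt⟩
      · exact h0
      · exfalso
        have h1 := hT j
        rw [hjeq] at h1
        exact absurd h1 (not_le.mpr hlt)
    have h0S : (0 : ℝ) ∈ S := by
      refine hbackward 0 le_rfl ?_
      unfold gspRank
      congr 1
      ext j
      simp only [Set.mem_setOf_eq, mul_zero]
      constructor
      · intro _; exact hT j
      · intro _; exact hs j
    rw [hNz, zero_div]
    exact le_antisymm (csInf_le ⟨0, fun z hz => hz.1⟩ h0S)
      (le_csInf ⟨0, h0S⟩ (fun z hz => hz.1))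

end Helpers

/-- in the separable click model with fixed distinct opponent
scores, (i) the GSP allocation of a bidder is monotone nondecreasing in her own
bid, (ii) her GSP payment equals her allocation times the infimum bid achieving
that allocation, and hence (iii) by the single-parameter characterization GSP is
truthful almost everywhere for simple value maximizers: the set of types with a
profitable deviation (a strictly larger allocation at an individually rational
payment, or an equal allocation at a strictly smaller payment) has measure
zero. -/
theorem gsp_monotone_threshold_truthful_ae
    {k : ℕ} (m : ℕ) (s : Fin k → ℝ) (β : ℝ) (A : ℕ → ℝ)
    (hβ : 0 < β)
    (hs : ∀ j, 0 ≤ s j) (hs_distinct : Function.Injective s)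
    (hA_strict : ∀ r r', r < r' → r' < m → A r' < A r)
    (hA_pos : ∀ r, r < m → 0 < A r) :
    Monotone (gspAlloc m s β A) ∧
    (∀ b : ℝ, 0 ≤ b →
      gspPay m s β A b =
        gspAlloc m s β A b *
          sInf {z : ℝ | 0 ≤ z ∧ gspAlloc m s β A z = gspAlloc m s β A b}) ∧
    volume {t : ℝ | 0 ≤ t ∧ ∃ b, 0 ≤ b ∧
        ((gspAlloc m s β A b > gspAlloc m s β A t ∧
            gspPay m s β A b ≤ t * gspAlloc m s β A b) ∨
         (gspAlloc m s β A b = gspAlloc m s β A t ∧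
            gspPay m s β A b < gspPay m s β A t))} = 0 := by
  refine ⟨gspAlloc_mono hβ hA_strict hA_pos, ?_, ?_⟩
  · intro b _
    by_cases hr : gspRank s β b < m
    · rw [gsp_sInf_eq hβ hs hA_strict hA_pos hr]
      rfl
    · have h0 : gspAlloc m s β A b = 0 := if_neg hr
      rw [gspPay, h0, zero_mul, zero_mul]
  · have hsubset : {t : ℝ | 0 ≤ t ∧ ∃ b, 0 ≤ b ∧
        ((gspAlloc m s β A b > gspAlloc m s β A t ∧
            gspPay m s β A b ≤ t * gspAlloc m s β A b) ∨
         (gspAlloc m s β A b = gspAlloc m s β A t ∧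
            gspPay m s β A b < gspPay m s β A t))} ⊆
        ⋃ j : Fin k, {s j / β} := by
      rintro t ⟨ht, b, hb, hcase⟩
      rcases hcase with ⟨hgt, hIR⟩ | ⟨heq, hlt⟩
      · -- a strictly larger allocation at an IR payment
        have hrb : gspRank s β b < m := by
          by_contra hc
          have h0 : gspAlloc m s β A b = 0 := if_neg hc
          have := gspAlloc_nonneg hβ hA_pos (m := m) (s := s) t
          rw [h0] at hgt
          linarith
        have hab : gspAlloc m s β A b = A (gspRank s β b) * β := if_pos hrb
        have habpos : 0 < gspAlloc m s β A b := by
          rw [hab]; exact mul_pos (hA_pos _ hrb) hβ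
        have hrt : gspRank s β b < gspRank s β t := by
          rcases lt_trichotomy (gspRank s β t) (gspRank s β b) with h1 | h1 | h1
          · have h2 : gspAlloc m s β A t = A (gspRank s β t) * β :=
              if_pos (h1.trans hrb)
            have h3 := hA_strict _ _ h1 hrb
            rw [hab, h2] at hgt
            nlinarith
          · exfalso
            have h2 : gspAlloc m s β A t = gspAlloc m s β A b := by
              unfold gspAlloc
              rw [h1]
            rw [h2] at hgt
            exact lt_irrefl _ hgt
          · exact h1
        have hex : ∃ j, β * t ≤ s j ∧ s j < β * b := by
          by_contra hc
          push_neg at hc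
          have hsub : {j : Fin k | β * t ≤ s j} ⊆ {j : Fin k | β * b ≤ s j} :=
            fun j hj => hc j hj
          have := Set.ncard_le_ncard hsub (Set.toFinite _)
          unfold gspRank at hrt
          omega
        obtain ⟨j, hj1, hj2⟩ := hex
        have hjN : s j ≤ gspNextScore s β b := le_gspNextScore hj2
        have hNle : gspNextScore s β b ≤ β * t := by
          rw [gspPay] at hIR
          have h1 : gspNextScore s β b / β ≤ t := by
            have h2 : gspNextScore s β b / β * gspAlloc m s β A b ≤
                t * gspAlloc m s β A b := by linarith [hIR]
            exact le_of_mul_le_mul_right h2 habpos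
          rw [div_le_iff₀ hβ] at h1
          linarith
        have hjt : s j = β * t := le_antisymm (hjN.trans hNle) hj1
        refine Set.mem_iUnion.mpr ⟨j, ?_⟩
        simp only [Set.mem_singleton_iff]
        rw [hjt]
        field_simp
      · -- same allocation at a strictly smaller payment: impossible
        exfalso
        by_cases hrt : gspRank s β t < m
        · have hrank : gspRank s β t = gspRank s β b :=
            rank_eq_of_alloc_eq hβ hA_strict hA_pos hrt heq.symm
          have hsge := sge_eq_of_rank_eq hβ hrank
          have hN := gspNextScore_congr hsge
          rw [gspPay, gspPay, hN, heq] at hlt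
          exact lt_irrefl _ hlt
        · have h1 : gspAlloc m s β A t = 0 := if_neg hrt
          rw [gspPay, gspPay, h1, heq, h1, zero_mul, zero_mul] at hlt
          exact lt_irrefl _ hlt
    exact measure_mono_null hsubset
      (measure_iUnion_null fun j => measure_singleton _)
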